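/- arXiv:2206.09338 — 8 statements merged into one kernel-verified Lean document; each statement's English description precedes it below -/
import Mathlib

section
/- Let ε > 0, let I ⊂ ℝ be an open interval, E : I → ℂ^{n×n} a differentiable path of matrices, λ : I → ℂ a differentiable function, and x, y : I → ℂⁿ with ‖x(t)‖ = ‖y(t)‖ = 1 and x(t)* y(t) real and positive for all t ∈ I, such that λ'(t) = ε (x(t)* E'(t) y(t)) / (x(t)* y(t)). Let f : ℂ → ℝ be differentiable in the real sense, and let p : I → ℂ be such that for every t ∈ I the Fréchet derivative of f at λ(t) is given by h ↦ Re(conj(p(t)) · h) for h ∈ ℂ. Set κ(t) = 1/(x(t)* y(t)) > 0 and G(t) = p(t) · x(t) y(t)* ∈ ℂ^{n×n} (a rank-one matrix). Then t ↦ f(λ(t)) is differentiable and (d/dt) f(λ(t)) = ε κ(t) · Re⟨G(t), E'(t)⟩. -/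
open Matrix

/-- Frobenius inner product `⟨X,Y⟩ = tr(X*Y) = Σᵢⱼ conj(Xᵢⱼ) Yᵢⱼ` on complex matrices. -/
noncomputable def frobInner {n : ℕ} (X Y : Matrix (Fin n) (Fin n) ℂ) : ℂ :=
  ∑ i, ∑ j, (starRingEnd ℂ) (X i j) * Y i j

/-- Free gradient of the functional `F_ε(E(t)) = f(λ(t))`:
`(d/dt) f(λ(t)) = ε κ(t) Re⟨G(t), E'(t)⟩` where `κ(t) = 1/(x(t)* y(t)) > 0` and
`G(t) = p(t) x(t) y(t)*` is the rank-one (rescaled) gradient. -/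
theorem free_gradient_derivative
    {n : ℕ} (ε a b : ℝ) (hε : 0 < ε)
    (E E' : ℝ → Matrix (Fin n) (Fin n) ℂ)
    (lam : ℝ → ℂ) (x y : ℝ → Fin n → ℂ) (f : ℂ → ℝ) (p : ℝ → ℂ)
    (hE : ∀ t ∈ Set.Ioo a b, ∀ i j, HasDerivAt (fun s => E s i j) (E' t i j) t)
    (hxnorm : ∀ t ∈ Set.Ioo a b, star (x t) ⬝ᵥ x t = 1)
    (hynorm : ∀ t ∈ Set.Ioo a b, star (y t) ⬝ᵥ y t = 1)
    (hxyreal : ∀ t ∈ Set.Ioo a b, (star (x t) ⬝ᵥ y t).im = 0)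
    (hxypos : ∀ t ∈ Set.Ioo a b, 0 < (star (x t) ⬝ᵥ y t).re)
    (hlam : ∀ t ∈ Set.Ioo a b,
      HasDerivAt lam ((ε : ℂ) * (star (x t) ⬝ᵥ (E' t).mulVec (y t)) / (star (x t) ⬝ᵥ y t)) t)
    (hf : ∀ t ∈ Set.Ioo a b, DifferentiableAt ℝ f (lam t))
    (hp : ∀ t ∈ Set.Ioo a b, ∀ h : ℂ, fderiv ℝ f (lam t) h = ((starRingEnd ℂ) (p t) * h).re)
    (t : ℝ) (ht : t ∈ Set.Ioo a b) :
    HasDerivAt (fun s => f (lam s))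
      (ε * ((star (x t) ⬝ᵥ y t).re)⁻¹ *
        (frobInner (p t • vecMulVec (x t) (star (y t))) (E' t)).re) t := by
  have hd := ((hf t ht).hasFDerivAt).comp_hasDerivAt t (hlam t ht)
  refine hd.congr_deriv ?_
  rw [hp t ht]
  set s := star (x t) ⬝ᵥ (E' t).mulVec (y t) with hs
  set c := star (x t) ⬝ᵥ y t with hc
  have hcre : c = ((c.re : ℝ) : ℂ) := by
    apply Complex.ext
    · simp
    · exact hxyreal t ht
  have hcne : (c.re : ℝ) ≠ 0 := ne_of_gt (hxypos t ht)
  have hfro : frobInner (p t • vecMulVec (x t) (star (y t))) (E' t)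
      = (starRingEnd ℂ) (p t) * s := by
    rw [hs]
    simp only [frobInner, Matrix.smul_apply, vecMulVec_apply, Pi.star_apply, smul_eq_mul,
      Complex.star_def, dotProduct, Matrix.mulVec, Finset.mul_sum]
    refine Finset.sum_congr rfl fun i _ => Finset.sum_congr rfl fun j _ => ?_
    simp only [_root_.map_mul, Complex.conj_conj]
    ring
  rw [hfro]
  have : (starRingEnd ℂ) (p t) * ((ε : ℂ) * s / c)
      = (((ε : ℝ) : ℂ) * (((c.re : ℝ)⁻¹ : ℝ) : ℂ)) * ((starRingEnd ℂ) (p t) * s) := by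
    rw [hcre]
    field_simp
    push_cast
    simp only [Complex.ofReal_re]
    ring
  rw [this]
  rw [show (((ε : ℝ) : ℂ) * (((c.re : ℝ)⁻¹ : ℝ) : ℂ)) = (((ε * (c.re)⁻¹ : ℝ)) : ℂ) by
    push_cast; ring]
  rw [Complex.re_ofReal_mul]
end

section
/- Let S be a real-linear subspace of ℂ^{n×n} with orthogonal projection Π^S, let E ∈ S with ‖E‖_F = 1, let G ∈ ℂ^{n×n} and set G^S = Π^S G. Assume W := −G^S + Re⟨G^S, E⟩ · E ≠ 0 (equivalently, G^S is not a real scalar multiple of E), and set μ = ‖W‖_F and Z⋆ = W / μ. Then: (i) Z⋆ ∈ S, Re⟨E, Z⋆⟩ = 0 and ‖Z⋆‖_F = 1; (ii) for every Z ∈ S with Re⟨E, Z⟩ = 0 and ‖Z‖_F = 1 one has Re⟨G, Z⋆⟩ ≤ Re⟨G, Z⟩; (iii) equality in (ii) holds only if Z = Z⋆. -/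
open Matrix

/-- Frobenius norm. -/
noncomputable def frobNorm {n : ℕ} (X : Matrix (Fin n) (Fin n) ℂ) : ℝ :=
  Real.sqrt (frobInner X X).re

noncomputable def mE {n : ℕ} (X : Matrix (Fin n) (Fin n) ℂ) :
    EuclideanSpace ℂ (Fin n × Fin n) :=
  (WithLp.equiv 2 _).symm (fun p => X p.1 p.2)

lemma mE_inj {n : ℕ} : Function.Injective (mE (n := n)) := by
  intro X Y h
  ext i j
  exact congrFun (congrArg WithLp.ofLp h) (i, j)

lemma mE_smul {n : ℕ} (r : ℝ) (X : Matrix (Fin n) (Fin n) ℂ) :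
    mE (r • X) = r • mE X := rfl

lemma frobInner_re {n : ℕ} (X Y : Matrix (Fin n) (Fin n) ℂ) :
    (frobInner X Y).re = (inner ℝ (mE X) (mE Y) : ℝ) := by
  rw [PiLp.inner_apply]
  simp only [Complex.inner, frobInner]
  rw [Fintype.sum_prod_type, Complex.re_sum]
  congr 1; ext i; rw [Complex.re_sum]; congr 1; ext j; rw [mul_comm]; rfl

lemma frobNorm_eq {n : ℕ} (X : Matrix (Fin n) (Fin n) ℂ) :
    frobNorm X = ‖mE X‖ := by
  rw [frobNorm, frobInner_re, norm_eq_sqrt_real_inner]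

/-- Direction of steepest admissible descent: with `W = -G^S + Re⟨G^S,E⟩E ≠ 0`, `μ = ‖W‖_F`
and `Z⋆ = W/μ`, the matrix `Z⋆` lies in `S`, is orthogonal to `E`, has unit norm, minimizes
`Re⟨G, Z⟩` among all such `Z`, and is the unique minimizer. -/
theorem steepest_admissible_descent
    {n : ℕ} (S : Submodule ℝ (Matrix (Fin n) (Fin n) ℂ))
    (P : Matrix (Fin n) (Fin n) ℂ → Matrix (Fin n) (Fin n) ℂ)
    (hPmem : ∀ Z, P Z ∈ S)
    (hPproj : ∀ Z, ∀ W ∈ S, (frobInner (P Z) W).re = (frobInner Z W).re)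
    (E : Matrix (Fin n) (Fin n) ℂ) (hE : E ∈ S) (hEnorm : frobNorm E = 1)
    (G W : Matrix (Fin n) (Fin n) ℂ)
    (hW : W = -(P G) + (frobInner (P G) E).re • E)
    (hWne : W ≠ 0)
    (μ : ℝ) (hμ : μ = frobNorm W)
    (Zstar : Matrix (Fin n) (Fin n) ℂ) (hZstar : Zstar = μ⁻¹ • W) :
    (Zstar ∈ S ∧ (frobInner E Zstar).re = 0 ∧ frobNorm Zstar = 1) ∧
    (∀ Z ∈ S, (frobInner E Z).re = 0 → frobNorm Z = 1 →
      (frobInner G Zstar).re ≤ (frobInner G Z).re) ∧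
    (∀ Z ∈ S, (frobInner E Z).re = 0 → frobNorm Z = 1 →
      (frobInner G Zstar).re = (frobInner G Z).re → Z = Zstar) := by
  set c : ℝ := (frobInner (P G) E).re with hc
  -- basic facts about mE images
  have hmE_add : ∀ X Y : Matrix (Fin n) (Fin n) ℂ, mE (X + Y) = mE X + mE Y := fun _ _ => rfl
  have hmE_neg : ∀ X : Matrix (Fin n) (Fin n) ℂ, mE (-X) = -mE X := fun _ => rfl
  have hWmem : W ∈ S := by
    rw [hW]; exact S.add_mem (S.neg_mem (hPmem G)) (S.smul_mem c hE)
  have hWE : mE W ≠ 0 := fun h => hWne (mE_inj (h.trans rfl))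
  have hμpos : 0 < μ := by
    rw [hμ, frobNorm_eq]; exact norm_pos_iff.mpr hWE
  have hμW : ‖mE W‖ = μ := by rw [hμ, frobNorm_eq]
  -- E has unit norm on euclidean side
  have hEn : ‖mE E‖ = 1 := by rw [← frobNorm_eq, hEnorm]
  -- orthogonality of W and E
  have hEW : (inner ℝ (mE E) (mE W) : ℝ) = 0 := by
    have h1 : (frobInner E (P G)).re = c := by
      rw [frobInner_re, real_inner_comm, ← frobInner_re, ← hc]
    have hEE : (frobInner E E).re = 1 := by
      rw [frobInner_re, real_inner_self_eq_norm_sq, hEn]; norm_num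
    have : (frobInner E W).re = 0 := by
      rw [hW, frobInner_re, hmE_add, hmE_neg, mE_smul, inner_add_right, inner_neg_right,
        inner_smul_right, ← frobInner_re, ← frobInner_re, h1, hEE]
      ring
    rwa [frobInner_re] at this
  have hZsmem : Zstar ∈ S := by rw [hZstar]; exact S.smul_mem _ hWmem
  have hZsE : mE Zstar = μ⁻¹ • mE W := by rw [hZstar, mE_smul]
  have hZsnorm : frobNorm Zstar = 1 := by
    rw [frobNorm_eq, hZsE, norm_smul, hμW, norm_inv, Real.norm_of_nonneg hμpos.le,
      inv_mul_cancel₀ hμpos.ne']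
  have hEZs : (frobInner E Zstar).re = 0 := by
    rw [frobInner_re, hZsE, inner_smul_right, hEW, mul_zero]
  -- key: for Z ∈ S with ⟪E,Z⟫=0, (frobInner G Z).re = -⟪mE W, mE Z⟫
  have hkey : ∀ Z ∈ S, (frobInner E Z).re = 0 →
      (frobInner G Z).re = -(inner ℝ (mE W) (mE Z) : ℝ) := by
    intro Z hZ hEZ
    have hPG : P G = c • E - W := by rw [hW]; abel
    rw [← hPproj G Z hZ, hPG, frobInner_re, real_inner_comm]
    rw [show mE (c • E - W) = c • mE E - mE W from rfl]
    have hZE : (frobInner Z E).re = 0 := by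
      rw [frobInner_re, real_inner_comm, ← frobInner_re, hEZ]
    rw [inner_sub_right, inner_smul_right, ← frobInner_re, hZE, real_inner_comm]
    ring
  have hGZs : (frobInner G Zstar).re = -μ := by
    rw [hkey Zstar hZsmem hEZs, hZsE, inner_smul_right, real_inner_self_eq_norm_sq, hμW]
    field_simp
  refine ⟨⟨hZsmem, hEZs, hZsnorm⟩, ?_, ?_⟩
  · intro Z hZ hEZ hZn
    rw [hGZs, hkey Z hZ hEZ, neg_le_neg_iff]
    calc (inner ℝ (mE W) (mE Z) : ℝ) ≤ ‖mE W‖ * ‖mE Z‖ := real_inner_le_norm _ _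
      _ = μ := by rw [hμW, ← frobNorm_eq, hZn, mul_one]
  · intro Z hZ hEZ hZn heq
    rw [hGZs, hkey Z hZ hEZ, neg_inj] at heq
    have hZn' : ‖mE Z‖ = 1 := by rw [← frobNorm_eq, hZn]
    have : (inner ℝ (mE W) (mE Z) : ℝ) = ‖mE W‖ * ‖mE Z‖ := by
      rw [hμW, hZn', mul_one, ← heq]
    have h2 := inner_eq_norm_mul_iff_real.mp this
    rw [hZn', hμW, one_smul] at h2
    apply mE_inj
    rw [hZsE, h2, smul_smul, inv_mul_cancel₀ hμpos.ne', one_smul]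
end

section
/- Let S be a real-linear subspace of ℂ^{n×n} with orthogonal projection Π^S. Let I ⊂ ℝ be an interval, Y : I → ℂ^{n×n} differentiable, and set E(t) = Π^S(Y(t)). Suppose at a point t₀ ∈ I one has ‖E(t₀)‖_F = 1 and Y'(t₀) = −K + Re⟨K, E(t₀)⟩ · Y(t₀) for some matrix K ∈ ℂ^{n×n}. Then Re⟨E(t₀), E'(t₀)⟩ = 0, i.e. the derivative of t ↦ ‖E(t)‖_F² vanishes at t₀. -/
open Matrix

lemma frobInner_re_comm {n : ℕ} (X Y : Matrix (Fin n) (Fin n) ℂ) :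
    (frobInner X Y).re = (frobInner Y X).re := by
  simp only [frobInner, Complex.re_sum, Complex.mul_re, Complex.conj_re, Complex.conj_im]
  apply Finset.sum_congr rfl; intro i _
  apply Finset.sum_congr rfl; intro j _
  ring

lemma frobInner_self_re {n : ℕ} (X : Matrix (Fin n) (Fin n) ℂ) :
    (frobInner X X).re = ∑ i, ∑ j, ((X i j).re ^ 2 + (X i j).im ^ 2) := by
  simp only [frobInner, Complex.re_sum, Complex.mul_re, Complex.conj_re, Complex.conj_im]
  apply Finset.sum_congr rfl; intro i _
  apply Finset.sum_congr rfl; intro j _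
  ring

lemma frobInner_self_re_nonneg {n : ℕ} (X : Matrix (Fin n) (Fin n) ℂ) :
    0 ≤ (frobInner X X).re := by
  rw [frobInner_self_re]
  positivity

lemma frobInner_add_left {n : ℕ} (X Y Z : Matrix (Fin n) (Fin n) ℂ) :
    frobInner (X + Y) Z = frobInner X Z + frobInner Y Z := by
  simp [frobInner, add_mul, Finset.sum_add_distrib]

lemma frobInner_neg_left {n : ℕ} (X Z : Matrix (Fin n) (Fin n) ℂ) :
    frobInner (-X) Z = -frobInner X Z := by
  simp [frobInner, Finset.sum_neg_distrib]

lemma frobInner_smul_left {n : ℕ} (r : ℝ) (X Z : Matrix (Fin n) (Fin n) ℂ) :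
    frobInner (r • X) Z = (r : ℂ) * frobInner X Z := by
  simp [frobInner, Matrix.smul_apply, Complex.real_smul, mul_assoc, Finset.mul_sum]

/-- The rank-1 projected differential equation `Y' = -K + Re⟨K, E⟩Y` (with `E = Π^S Y`)
preserves the unit Frobenius norm of `E = Π^S Y`: at a point `t₀` where `‖E(t₀)‖_F = 1`,
`Re⟨E(t₀), E'(t₀)⟩ = 0`, i.e. the derivative of `t ↦ ‖E(t)‖_F²` vanishes. -/
theorem projected_flow_norm_conservation
    {n : ℕ} (S : Submodule ℝ (Matrix (Fin n) (Fin n) ℂ))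
    (P : Matrix (Fin n) (Fin n) ℂ →ₗ[ℝ] Matrix (Fin n) (Fin n) ℂ)
    (hPmem : ∀ Z, P Z ∈ S)
    (hPproj : ∀ Z, ∀ W ∈ S, (frobInner (P Z) W).re = (frobInner Z W).re)
    (t₀ : ℝ) (Y : ℝ → Matrix (Fin n) (Fin n) ℂ) (Y' K : Matrix (Fin n) (Fin n) ℂ)
    (hY : ∀ i j, HasDerivAt (fun s => Y s i j) (Y' i j) t₀)
    (hEnorm : frobNorm (P (Y t₀)) = 1)
    (hode : Y' = -K + (frobInner K (P (Y t₀))).re • Y t₀) :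
    (frobInner (P (Y t₀)) (P Y')).re = 0 ∧
    HasDerivAt (fun t => (frobNorm (P (Y t))) ^ 2) 0 t₀ := by
  set E := P (Y t₀) with hE
  set c : ℝ := (frobInner K E).re with hc
  -- ‖E‖² = 1
  have hE2 : (frobInner E E).re = 1 := by
    have h := hEnorm
    rw [frobNorm] at h
    have := frobInner_self_re_nonneg E
    nlinarith [Real.sq_sqrt this, h]
  -- Part 1
  have key : (frobInner E (P Y')).re = 0 := by
    have h1 : (frobInner E (P Y')).re = (frobInner Y' E).re := by
      rw [frobInner_re_comm]; exact hPproj Y' E (hPmem _)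
    have h2 : (frobInner (Y t₀) E).re = 1 := by
      rw [← hPproj (Y t₀) E (hPmem _), ← hE, hE2]
    have h3 : (frobInner Y' E).re = -c + c * (frobInner (Y t₀) E).re := by
      rw [hode, frobInner_add_left, frobInner_neg_left, frobInner_smul_left]
      simp [hc]
    rw [h1, h3, h2]; ring
  refine ⟨key, ?_⟩
  -- derivative of Y as a map into the pi space
  letI : NormedAddCommGroup (Matrix (Fin n) (Fin n) ℂ) :=
    (by infer_instance : NormedAddCommGroup ((Fin n) → (Fin n) → ℂ))
  letI : NormedSpace ℝ (Matrix (Fin n) (Fin n) ℂ) :=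
    (by infer_instance : NormedSpace ℝ ((Fin n) → (Fin n) → ℂ))
  have hYd : HasDerivAt Y Y' t₀ := by
    rw [show HasDerivAt Y Y' t₀ ↔ _ from hasDerivAt_pi]; intro i
    rw [hasDerivAt_pi]; intro j
    exact hY i j
  have hPc : HasDerivAt (fun t => P (Y t)) (P Y') t₀ := by
    have := (P.toContinuousLinearMap.hasFDerivAt (x := Y t₀)).comp_hasDerivAt t₀ hYd
    exact this
  have hg : ∀ i j, HasDerivAt (fun t => P (Y t) i j) (P Y' i j) t₀ := by
    intro i j
    have h1 := (hasDerivAt_pi.mp hPc) i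
    exact (hasDerivAt_pi.mp h1) j
  -- each entry squared norm
  have hsq : ∀ i j, HasDerivAt (fun t => ((P (Y t) i j).re ^ 2 + (P (Y t) i j).im ^ 2))
      (2 * ((P (Y t₀) i j).re * (P Y' i j).re + (P (Y t₀) i j).im * (P Y' i j).im)) t₀ := by
    intro i j
    have hre : HasDerivAt (fun t => (P (Y t) i j).re) ((P Y' i j).re) t₀ :=
      (Complex.reCLM.hasFDerivAt.comp_hasDerivAt t₀ (hg i j))
    have him : HasDerivAt (fun t => (P (Y t) i j).im) ((P Y' i j).im) t₀ :=
      (Complex.imCLM.hasFDerivAt.comp_hasDerivAt t₀ (hg i j))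
    have := ((hre.mul hre).add (him.mul him))
    convert this using 1
    · rfl
    · rfl
    · funext t; simp only [Pi.add_apply, Pi.mul_apply]; ring
    · ring
  have hsum : HasDerivAt (fun t => ∑ i, ∑ j, ((P (Y t) i j).re ^ 2 + (P (Y t) i j).im ^ 2))
      (∑ i, ∑ j, 2 * ((P (Y t₀) i j).re * (P Y' i j).re + (P (Y t₀) i j).im * (P Y' i j).im)) t₀ := by
    apply HasDerivAt.fun_sum; intro i _
    apply HasDerivAt.fun_sum; intro j _
    exact hsq i j
  have heq : (fun t => (frobNorm (P (Y t))) ^ 2)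
      = fun t => ∑ i, ∑ j, ((P (Y t) i j).re ^ 2 + (P (Y t) i j).im ^ 2) := by
    funext t
    rw [frobNorm, Real.sq_sqrt (frobInner_self_re_nonneg _), frobInner_self_re]
  have hval : (∑ i, ∑ j, 2 * ((P (Y t₀) i j).re * (P Y' i j).re
      + (P (Y t₀) i j).im * (P Y' i j).im)) = 0 := by
    have : (∑ i, ∑ j, 2 * ((P (Y t₀) i j).re * (P Y' i j).re
        + (P (Y t₀) i j).im * (P Y' i j).im)) = 2 * (frobInner E (P Y')).re := by
      rw [hE, frobInner, Complex.re_sum, Finset.mul_sum]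
      apply Finset.sum_congr rfl; intro i _
      rw [Complex.re_sum, Finset.mul_sum]
      apply Finset.sum_congr rfl; intro j _
      simp only [Complex.mul_re, Complex.conj_re, Complex.conj_im]
      ring
    rw [this, key, mul_zero]
  rw [heq, ← hval]
  exact hsum
end

section
/- Let u, v, x, y ∈ ℂⁿ be unit vectors, c ∈ ℂ, μ ∈ ℝ with μ ≠ 0, and let W ∈ ℂ^{n×n} satisfy (I − u u*) W (I − v v*) = W. If c · x y* = μ · u v* + W, then W = 0 and c · x y* = μ · u v*; in particular x is a complex scalar multiple of u and y is a complex scalar multiple of v (whenever c ≠ 0). -/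
open Matrix

lemma vecMulVec_mulVec' {n : ℕ} (a b w : Fin n → ℂ) :
    vecMulVec a b *ᵥ w = (b ⬝ᵥ w) • a := by
  funext i
  simp [vecMulVec_apply, mulVec, dotProduct, Finset.sum_mul, Finset.mul_sum]
  ring_nf

lemma vecMul_smulMatrix {n : ℕ} (w : Fin n → ℂ) (s : ℂ) (A : Matrix (Fin n) (Fin n) ℂ) :
    w ᵥ* (s • A) = s • (w ᵥ* A) := by
  funext j
  simp [vecMul, dotProduct, Finset.mul_sum]
  exact Finset.sum_congr rfl fun i _ => by ring

lemma mulVec_smulMatrix {n : ℕ} (s : ℂ) (A : Matrix (Fin n) (Fin n) ℂ) (w : Fin n → ℂ) :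
    (s • A) *ᵥ w = s • (A *ᵥ w) := Matrix.smul_mulVec s A w

lemma vecMul_vecMulVec' {n : ℕ} (a b w : Fin n → ℂ) :
    w ᵥ* vecMulVec a b = (w ⬝ᵥ a) • b := by
  funext j
  simp [vecMulVec_apply, vecMul, dotProduct, Finset.sum_mul]
  exact Finset.sum_congr rfl fun i _ => by ring

/-- A rank-one matrix that decomposes as a real multiple of `u v*` plus a part `W`
annihilated by the tangent-space projection (i.e. `(I-uu*) W (I-vv*) = W`) must itself be
that multiple of `u v*`; in particular `x` and `y` are then complex multiples of `u` and `v`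
whenever `c ≠ 0`. -/
theorem rank_one_decomposition
    {n : ℕ} (u v x y : Fin n → ℂ)
    (hu : star u ⬝ᵥ u = 1) (hv : star v ⬝ᵥ v = 1)
    (hx : star x ⬝ᵥ x = 1) (hy : star y ⬝ᵥ y = 1)
    (c : ℂ) (μ : ℝ) (hμ : μ ≠ 0)
    (W : Matrix (Fin n) (Fin n) ℂ)
    (hW : (1 - vecMulVec u (star u)) * W * (1 - vecMulVec v (star v)) = W)
    (h : c • vecMulVec x (star y) = (μ : ℂ) • vecMulVec u (star v) + W) :
    W = 0 ∧ c • vecMulVec x (star y) = (μ : ℂ) • vecMulVec u (star v) ∧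
      (c ≠ 0 → (∃ a : ℂ, x = a • u) ∧ ∃ b : ℂ, y = b • v) := by
  have hWv : W *ᵥ v = 0 := by
    rw [← hW, ← Matrix.mulVec_mulVec]
    have : (1 - vecMulVec v (star v)) *ᵥ v = 0 := by
      rw [Matrix.sub_mulVec, vecMulVec_mulVec', hv, one_smul, Matrix.one_mulVec, sub_self]
    rw [this, Matrix.mulVec_zero]
  have huW : star u ᵥ* W = 0 := by
    rw [← hW, Matrix.mul_assoc, ← Matrix.vecMul_vecMul]
    have : star u ᵥ* (1 - vecMulVec u (star u)) = 0 := by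
      rw [Matrix.vecMul_sub, vecMul_vecMulVec', hu, one_smul, Matrix.vecMul_one, sub_self]
    rw [this, Matrix.zero_vecMul]
  -- multiply h on the left by star u
  have h1 : (c * (star u ⬝ᵥ x)) • star y = (μ : ℂ) • star v := by
    have := congrArg (fun M => star u ᵥ* M) h
    simp only [Matrix.vecMul_add, vecMul_smulMatrix, vecMul_vecMulVec', huW, add_zero,
      smul_smul] at this
    rw [this, hu, mul_one]
  -- multiply h on the right by v
  have h2 : (c * (star y ⬝ᵥ v)) • x = (μ : ℂ) • u := by
    have := congrArg (fun M => M *ᵥ v) h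
    simp only [Matrix.add_mulVec, mulVec_smulMatrix, vecMulVec_mulVec', hWv, add_zero,
      smul_smul] at this
    rw [this, hv, mul_one]
  set α : ℂ := star u ⬝ᵥ x with hα
  set β : ℂ := star y ⬝ᵥ v with hβ
  have hcαβ : c * α * β = (μ : ℂ) := by
    have := congrArg (fun w => w ⬝ᵥ v) h1
    simpa [dotProduct_smul, hv, smul_eq_mul, mul_assoc] using this
  have hμ' : (μ : ℂ) ≠ 0 := by exact_mod_cast hμ
  have hc : c ≠ 0 := fun hc0 => hμ' (by rw [← hcαβ, hc0, zero_mul, zero_mul])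
  have hαne : α ≠ 0 := fun h0 => hμ' (by rw [← hcαβ, h0, mul_zero, zero_mul])
  have hβne : β ≠ 0 := fun h0 => hμ' (by rw [← hcαβ, h0, mul_zero])
  have hxu : x = ((μ : ℂ) / (c * β)) • u := by
    have hne : c * β ≠ 0 := mul_ne_zero hc hβne
    have hx2 : x = (c * β)⁻¹ • ((μ : ℂ) • u) := by
      rw [← h2, smul_smul, inv_mul_cancel₀ hne, one_smul]
    rw [hx2, smul_smul, div_eq_inv_mul]
  have hyv : star y = ((μ : ℂ) / (c * α)) • star v := by
    have hne : c * α ≠ 0 := mul_ne_zero hc hαne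
    have hy2 : star y = (c * α)⁻¹ • ((μ : ℂ) • star v) := by
      rw [← h1, smul_smul, inv_mul_cancel₀ hne, one_smul]
    rw [hy2, smul_smul, div_eq_inv_mul]
  have key : c • vecMulVec x (star y) = (μ : ℂ) • vecMulVec u (star v) := by
    rw [hxu, hyv]
    funext i j
    simp only [Matrix.smul_apply, vecMulVec_apply, Pi.smul_apply, smul_eq_mul]
    field_simp
    rw [← hcαβ]
    ring
  refine ⟨?_, key, fun _ => ⟨⟨_, hxu⟩, ⟨star ((μ : ℂ) / (c * α)), ?_⟩⟩⟩
  · have h0 : (μ : ℂ) • vecMulVec u (star v) + W = (μ : ℂ) • vecMulVec u (star v) :=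
      h.symm.trans key
    exact add_eq_left.mp h0
  · have := congrArg star hyv
    simpa [star_smul] using this
end

section
/- Let S be a real-linear subspace of ℂ^{n×n} with orthogonal projection Π^S. Let u, v, x, y ∈ ℂⁿ be unit vectors, ρ > 0, Y = ρ · u v*, E = Π^S Y with ‖E‖_F = 1, c ∈ ℂ, and G = c · x y*. Define P_Y(Z) = Z − (I − u u*) Z (I − v v*). Assume P_Y(G) ≠ 0 and that Y is a stationary point of the rank-1 projected differential equation, i.e. −P_Y(G) + Re⟨P_Y(G), E⟩ · Y = 0. Then: (i) P_Y(G) = G; (ii) there is a nonzero real number μ such that G = μ · Y; (iii) E is a stationary point of the structure-constrained gradient system, i.e. −Π^S G + Re⟨Π^S G, E⟩ · E = 0. -/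
open Matrix

private lemma vecMul_vmv {n : ℕ} (w a b : Fin n → ℂ) :
    (vecMulVec a b).vecMul w = (w ⬝ᵥ a) • b := by
  ext j; simp [Matrix.vecMul, vecMulVec_apply, dotProduct, Finset.sum_mul, mul_assoc]

private lemma vmv_mulVec {n : ℕ} (w a b : Fin n → ℂ) :
    (vecMulVec a b).mulVec w = (b ⬝ᵥ w) • a := by
  ext i
  simp only [Matrix.mulVec, vecMulVec_apply, dotProduct, Pi.smul_apply, smul_eq_mul,
    Finset.sum_mul, Finset.mul_sum]
  exact Finset.sum_congr rfl fun j _ => by ring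

private lemma vmv_smul_smul {n : ℕ} (s t : ℂ) (a b : Fin n → ℂ) :
    vecMulVec (s • a) (t • b) = (s * t) • vecMulVec a b := by
  ext i j; simp [vecMulVec_apply]; ring

private lemma vecMul_smulM {n : ℕ} (w : Fin n → ℂ) (s : ℂ) (M : Matrix (Fin n) (Fin n) ℂ) :
    w ᵥ* (s • M) = s • (w ᵥ* M) := by
  ext j
  simp only [Matrix.vecMul, dotProduct, Matrix.smul_apply, Pi.smul_apply, smul_eq_mul,
    Finset.mul_sum]
  exact Finset.sum_congr rfl fun i _ => by ring

private lemma coe_smul_mat {n : ℕ} (r : ℝ) (M : Matrix (Fin n) (Fin n) ℂ) :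
    (r : ℂ) • M = r • M := by
  ext i j; simp [Complex.real_smul]

/-- If `Y = ρ u v*` is a stationary point of the rank-1 projected differential equation with
`P_Y(G) ≠ 0`, `E = Π^S Y`, `‖E‖_F = 1` and `G = c·x y*`, then `P_Y(G) = G`, `G` is a nonzero
real multiple of `Y`, and `E` is a stationary point of the structure-constrained gradient
system. -/
theorem rank_one_stationary_to_gradient_stationary
    {n : ℕ} (S : Submodule ℝ (Matrix (Fin n) (Fin n) ℂ))
    (P : Matrix (Fin n) (Fin n) ℂ →ₗ[ℝ] Matrix (Fin n) (Fin n) ℂ)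
    (hPmem : ∀ Z, P Z ∈ S)
    (hPproj : ∀ Z, ∀ W ∈ S, (frobInner (P Z) W).re = (frobInner Z W).re)
    (u v x y : Fin n → ℂ)
    (hu : star u ⬝ᵥ u = 1) (hv : star v ⬝ᵥ v = 1)
    (hx : star x ⬝ᵥ x = 1) (hy : star y ⬝ᵥ y = 1)
    (ρ : ℝ) (hρ : 0 < ρ) (c : ℂ)
    (Y E G : Matrix (Fin n) (Fin n) ℂ)
    (hY : Y = ρ • vecMulVec u (star v)) (hE : E = P Y) (hEnorm : frobNorm E = 1)
    (hG : G = c • vecMulVec x (star y))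
    (PY : Matrix (Fin n) (Fin n) ℂ → Matrix (Fin n) (Fin n) ℂ)
    (hPY : ∀ Z, PY Z = Z - (1 - vecMulVec u (star u)) * Z * (1 - vecMulVec v (star v)))
    (hPYG : PY G ≠ 0)
    (hstat : -(PY G) + (frobInner (PY G) E).re • Y = 0) :
    PY G = G ∧
    (∃ μ : ℝ, μ ≠ 0 ∧ G = (μ : ℂ) • Y) ∧
    -(P G) + (frobInner (P G) E).re • E = 0 := by
  set α := (frobInner (PY G) E).re with hαdef
  have hPYGY : PY G = α • Y := neg_add_eq_zero.mp hstat
  have hαne : α ≠ 0 := by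
    intro h
    exact hPYG (by rw [hPYGY, h, zero_smul])
  set r : ℂ := ((α * ρ : ℝ) : ℂ) with hrdef
  have hrne : r ≠ 0 := by
    simp only [hrdef, ne_eq, Complex.ofReal_eq_zero]
    exact mul_ne_zero hαne (ne_of_gt hρ)
  have hYr : α • Y = r • vecMulVec u (star v) := by
    rw [hY, smul_smul, hrdef, coe_smul_mat]
  -- equation (A): star u ᵥ* (PY G) = star u ᵥ* G
  have h1 : (star u) ᵥ* (1 - vecMulVec u (star u)) = 0 := by
    rw [Matrix.vecMul_sub, Matrix.vecMul_one, vecMul_vmv, hu, one_smul, sub_self]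
  have hA : (c * (star u ⬝ᵥ x)) • (star y) = r • (star v) := by
    have l1 : (star u) ᵥ* (PY G) = (star u) ᵥ* G := by
      rw [hPY, Matrix.vecMul_sub, ← Matrix.vecMul_vecMul, ← Matrix.vecMul_vecMul, h1,
        Matrix.zero_vecMul, Matrix.zero_vecMul, sub_zero]
    have l2 : (star u) ᵥ* G = (c * (star u ⬝ᵥ x)) • (star y) := by
      rw [hG, vecMul_smulM, vecMul_vmv, smul_smul]
    have l3 : (star u) ᵥ* (PY G) = r • (star v) := by
      rw [hPYGY, hYr, vecMul_smulM, vecMul_vmv, hu, one_smul]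
    rw [l1, l2] at l3
    exact l3
  -- equation (B): (PY G) *ᵥ v = G *ᵥ v
  have h2 : (1 - vecMulVec v (star v)) *ᵥ v = 0 := by
    rw [Matrix.sub_mulVec, Matrix.one_mulVec, vmv_mulVec, hv, one_smul, sub_self]
  have hB : (c * (star y ⬝ᵥ v)) • x = r • u := by
    have l1 : (PY G) *ᵥ v = G *ᵥ v := by
      rw [hPY, Matrix.sub_mulVec, ← Matrix.mulVec_mulVec, h2, Matrix.mulVec_zero, sub_zero]
    have l2 : G *ᵥ v = (c * (star y ⬝ᵥ v)) • x := by
      rw [hG, Matrix.smul_mulVec, vmv_mulVec, smul_smul]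
    have l3 : (PY G) *ᵥ v = r • u := by
      rw [hPYGY, hYr, Matrix.smul_mulVec, vmv_mulVec, hv, one_smul]
    rw [l1, l2] at l3
    exact l3
  -- the scalar a = c ⟨u,x⟩ is nonzero
  set a : ℂ := c * (star u ⬝ᵥ x) with hadef
  have hane : a ≠ 0 := by
    intro h
    rw [h, zero_smul] at hA
    have hsv : star v = 0 := (smul_eq_zero.mp hA.symm).resolve_left hrne
    rw [hsv] at hv
    simp [dotProduct] at hv
  have hcne : c ≠ 0 := fun h => hane (by rw [hadef, h, zero_mul])
  have hsy : star y = (a⁻¹ * r) • star v := by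
    calc star y = (a⁻¹ * a) • star y := by rw [inv_mul_cancel₀ hane, one_smul]
    _ = a⁻¹ • (a • star y) := by rw [smul_smul]
    _ = a⁻¹ • (r • star v) := by rw [hA]
    _ = (a⁻¹ * r) • star v := by rw [smul_smul]
  have hyv : star y ⬝ᵥ v = a⁻¹ * r := by
    rw [hsy, smul_dotProduct, hv, smul_eq_mul, mul_one]
  set b : ℂ := c * (a⁻¹ * r) with hbdef
  have hbne : b ≠ 0 := mul_ne_zero hcne (mul_ne_zero (inv_ne_zero hane) hrne)
  have hB' : b • x = r • u := by rw [hbdef, ← hyv] ; exact hB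
  have hxu : x = (b⁻¹ * r) • u := by
    calc x = (b⁻¹ * b) • x := by rw [inv_mul_cancel₀ hbne, one_smul]
    _ = b⁻¹ • (b • x) := by rw [smul_smul]
    _ = b⁻¹ • (r • u) := by rw [hB']
    _ = (b⁻¹ * r) • u := by rw [smul_smul]
  have hscal : c * ((b⁻¹ * r) * (a⁻¹ * r)) = r := by
    rw [hbdef]
    field_simp
  have hGY : G = α • Y := by
    rw [hG, hxu, hsy, vmv_smul_smul, smul_smul, hscal, hYr]
  refine ⟨hPYGY.trans hGY.symm, ⟨α, hαne, by rw [hGY, coe_smul_mat]⟩, ?_⟩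
  have hPG : P G = α • E := by rw [hGY, _root_.map_smul, hE]
  have hEE : (frobInner E E).re = 1 := by
    have h := hEnorm
    unfold frobNorm at h
    rwa [Real.sqrt_eq_one] at h
  have hfs : frobInner (α • E) E = (α : ℂ) * frobInner E E := by
    unfold frobInner
    simp only [Finset.mul_sum, Matrix.smul_apply, Complex.real_smul, _root_.map_mul,
      Complex.conj_ofReal, mul_assoc]
  have hre : (frobInner (P G) E).re = α := by
    rw [hPG, hfs, Complex.re_ofReal_mul, hEE, mul_one]
  rw [hre, hPG, neg_add_cancel]
end

section
/- Let u, v ∈ ℂⁿ be unit vectors, ρ > 0, Y = ρ · u v*, and let E, G ∈ ℂ^{n×n}. Define P_Y(Z) = Z − (I − u u*) Z (I − v v*) and set r = Re⟨P_Y(G), E⟩. Define a = −(I − u u*) G v − (i/2) Im(u* G v) · u, b = −(I − v v*) G* u + (i/2) Im(u* G v) · v, and c = −Re(u* G v) + r ρ. Then: (i) −P_Y(G) + r · Y = a v* + u b* + c · u v*; (ii) Re(u* a) = 0 and Re(v* b) = 0 (so the factor differential equations ρ u̇ = a, ρ v̇ = b preserve the unit norms of u and v). -/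
open Matrix

lemma vmv_mulVec_s11 {n : ℕ} (M : Matrix (Fin n) (Fin n) ℂ) (x w : Fin n → ℂ) :
    vecMulVec (M.mulVec x) w = M * vecMulVec x w := by
  ext i j
  simp [vecMulVec_apply, Matrix.mul_apply, mulVec, dotProduct, Finset.sum_mul, mul_assoc]

lemma vmv_star_mulVec {n : ℕ} (M : Matrix (Fin n) (Fin n) ℂ) (x y : Fin n → ℂ) :
    vecMulVec x (star (M.mulVec y)) = vecMulVec x (star y) * Mᴴ := by
  ext i j
  simp [vecMulVec_apply, Matrix.mul_apply, mulVec, dotProduct, Finset.mul_sum,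
    Matrix.conjTranspose_apply, mul_comm, mul_left_comm]

lemma vmv_sub_left {n : ℕ} (x y w : Fin n → ℂ) :
    vecMulVec (x - y) w = vecMulVec x w - vecMulVec y w := by
  ext i j; simp [vecMulVec_apply, sub_mul]

lemma vmv_add_right {n : ℕ} (x w z : Fin n → ℂ) :
    vecMulVec x (w + z) = vecMulVec x w + vecMulVec x z := by
  ext i j; simp [vecMulVec_apply, mul_add]

lemma vmv_smul_left {n : ℕ} (c : ℂ) (x w : Fin n → ℂ) :
    vecMulVec (c • x) w = c • vecMulVec x w := by
  ext i j; simp [vecMulVec_apply, mul_assoc]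

lemma vmv_smul_right {n : ℕ} (c : ℂ) (x w : Fin n → ℂ) :
    vecMulVec x (c • w) = c • vecMulVec x w := by
  ext i j; simp [vecMulVec_apply]; ring

lemma vmv_neg_left {n : ℕ} (x w : Fin n → ℂ) :
    vecMulVec (-x) w = -vecMulVec x w := by
  ext i j; simp [vecMulVec_apply]

lemma vmv_neg_right {n : ℕ} (x w : Fin n → ℂ) :
    vecMulVec x (-w) = -vecMulVec x w := by
  ext i j; simp [vecMulVec_apply]

lemma vmv_mulVec_eq_smul {n : ℕ} (x y w : Fin n → ℂ) :
    (vecMulVec x y).mulVec w = (y ⬝ᵥ w) • x := by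
  ext i
  simp only [mulVec, dotProduct, vecMulVec_apply, Pi.smul_apply, smul_eq_mul, Finset.sum_mul]
  exact Finset.sum_congr rfl fun j _ => by ring

lemma UGV_eq {n : ℕ} (u v : Fin n → ℂ) (G : Matrix (Fin n) (Fin n) ℂ) :
    vecMulVec u (star u) * G * vecMulVec v (star v) =
      (star u ⬝ᵥ G.mulVec v) • vecMulVec u (star v) := by
  ext i j
  simp only [Matrix.mul_apply, vecMulVec_apply, Matrix.smul_apply, dotProduct, mulVec,
    Pi.star_apply, smul_eq_mul, Finset.sum_mul, Finset.mul_sum]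
  rw [Finset.sum_comm]
  apply Finset.sum_congr rfl; intro k _
  apply Finset.sum_congr rfl; intro l _
  ring

lemma uPerp {n : ℕ} (u : Fin n → ℂ) (hu : star u ⬝ᵥ u = 1) (w : Fin n → ℂ) :
    star u ⬝ᵥ (1 - vecMulVec u (star u)).mulVec w = 0 := by
  rw [Matrix.sub_mulVec, Matrix.one_mulVec, dotProduct_sub, vmv_mulVec_eq_smul,
    dotProduct_smul, hu]
  simp

/-- Decomposition of the rank-1 projected vector field into the factor differential
equations: with `Y = ρ u v*`, `r = Re⟨P_Y(G), E⟩`,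
`a = -(I-uu*)Gv - (i/2)Im(u*Gv)u`, `b = -(I-vv*)G*u + (i/2)Im(u*Gv)v` and
`c = -Re(u*Gv) + rρ`, one has `-P_Y(G) + r·Y = a v* + u b* + c·u v*`, and
`Re(u*a) = 0`, `Re(v*b) = 0`, so the factor ODEs `ρu̇ = a`, `ρv̇ = b` preserve unit norms. -/
theorem rank_one_factor_decomposition
    {n : ℕ} (u v : Fin n → ℂ)
    (hu : star u ⬝ᵥ u = 1) (hv : star v ⬝ᵥ v = 1)
    (ρ : ℝ) (hρ : 0 < ρ)
    (E G Y : Matrix (Fin n) (Fin n) ℂ)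
    (hY : Y = ρ • vecMulVec u (star v))
    (PY : Matrix (Fin n) (Fin n) ℂ → Matrix (Fin n) (Fin n) ℂ)
    (hPY : ∀ Z, PY Z = Z - (1 - vecMulVec u (star u)) * Z * (1 - vecMulVec v (star v)))
    (r : ℝ) (hr : r = (frobInner (PY G) E).re)
    (a b : Fin n → ℂ) (c : ℝ)
    (ha : a = -((1 - vecMulVec u (star u)).mulVec (G.mulVec v)) -
      ((Complex.I / 2) * (((star u ⬝ᵥ G.mulVec v).im : ℝ) : ℂ)) • u)
    (hb : b = -((1 - vecMulVec v (star v)).mulVec (Gᴴ.mulVec u)) +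
      ((Complex.I / 2) * (((star u ⬝ᵥ G.mulVec v).im : ℝ) : ℂ)) • v)
    (hc : c = -(star u ⬝ᵥ G.mulVec v).re + r * ρ) :
    (-(PY G) + r • Y =
      vecMulVec a (star v) + vecMulVec u (star b) + c • vecMulVec u (star v)) ∧
    (star u ⬝ᵥ a).re = 0 ∧ (star v ⬝ᵥ b).re = 0 := by
  set U := vecMulVec u (star u) with hU
  set V := vecMulVec v (star v) with hV
  set W := vecMulVec u (star v) with hW
  set β := star u ⬝ᵥ G.mulVec v with hβ
  set γ : ℂ := (Complex.I / 2) * ((β.im : ℝ) : ℂ) with hγ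
  have hγ2 : γ = ((β.im / 2 : ℝ) : ℂ) * Complex.I := by
    rw [hγ]; push_cast; ring
  refine ⟨?_, ?_, ?_⟩
  · -- matrix identity
    have hav : vecMulVec a (star v) = -((1 - U) * G * V) - γ • W := by
      rw [ha, vmv_sub_left, vmv_neg_left, Matrix.mulVec_mulVec, vmv_mulVec_s11, vmv_smul_left]
    have hbv : vecMulVec u (star b) = -(U * (G * (1 - V))) + -γ • W := by
      rw [hb]
      rw [show star (-((1 - V).mulVec (Gᴴ.mulVec u)) + γ • v)
          = star (-((1 - V).mulVec (Gᴴ.mulVec u))) + (starRingEnd ℂ γ) • star v by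
        rw [star_add, star_smul]; rfl]
      rw [vmv_add_right, vmv_smul_right]
      have h1 : vecMulVec u (star (-((1 - V).mulVec (Gᴴ.mulVec u))))
          = -(U * (G * (1 - V))) := by
        rw [show star (-((1 - V).mulVec (Gᴴ.mulVec u)))
            = -(star (((1 - V) * Gᴴ).mulVec u)) by rw [star_neg, Matrix.mulVec_mulVec]]
        rw [vmv_neg_right, vmv_star_mulVec]
        congr 1
        rw [Matrix.conjTranspose_mul, Matrix.conjTranspose_conjTranspose,
          Matrix.conjTranspose_sub, Matrix.conjTranspose_one]
        have hVH : Vᴴ = V := by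
          ext i j; simp [hV, vecMulVec_apply, Matrix.conjTranspose_apply, mul_comm]
        rw [hVH, ← Matrix.mul_assoc]
      have h2 : starRingEnd ℂ γ = -γ := by
        rw [hγ2, _root_.map_mul, Complex.conj_I, Complex.conj_ofReal]; ring
      rw [h1, h2]
    have hconj : -(PY G) + r • Y
        = -G + (1 - U) * G * (1 - V) + ((r * ρ : ℝ) : ℂ) • W := by
      rw [hPY, hY, smul_smul]
      ext i j
      simp [Matrix.add_apply, Matrix.sub_apply, Matrix.neg_apply, Matrix.smul_apply,
        Complex.real_smul]
      ring
    have hUGV : U * G * V = β • W := UGV_eq u v G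
    have key : -G + (1 - U) * G * (1 - V)
        = -((1 - U) * G * V) - (U * (G * (1 - V))) - β • W := by
      have expand : (1 - U) * G * (1 - V) = G - U * G - G * V + U * G * V := by
        noncomm_ring
      have expand2 : (1 - U) * G * V = G * V - U * G * V := by noncomm_ring
      have expand3 : U * (G * (1 - V)) = U * G - U * G * V := by noncomm_ring
      rw [expand, expand2, expand3, hUGV]
      abel
    have hcoefc : -β + ((r * ρ : ℝ) : ℂ) = -γ + -γ + ((c : ℝ) : ℂ) := by
      rw [hγ2, hc]
      apply Complex.ext <;> simp <;> ring
    have hsm : -(β • W) + ((r * ρ : ℝ) : ℂ) • W = -(γ • W) + (-γ) • W + ((c : ℝ) : ℂ) • W := by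
      rw [← neg_smul, ← neg_smul, ← add_smul, ← add_smul, ← add_smul, hcoefc]
    have realsmul : c • W = ((c : ℝ) : ℂ) • W := by
      ext i j; simp [Complex.real_smul]
    rw [hconj, hav, hbv, key, realsmul]
    calc -((1 - U) * G * V) - U * (G * (1 - V)) - β • W + ((r * ρ : ℝ) : ℂ) • W
        = -((1 - U) * G * V) - U * (G * (1 - V)) + (-(β • W) + ((r * ρ : ℝ) : ℂ) • W) := by
          abel
      _ = -((1 - U) * G * V) - U * (G * (1 - V))
            + (-(γ • W) + (-γ) • W + ((c : ℝ) : ℂ) • W) := by rw [hsm]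
      _ = (-((1 - U) * G * V) - γ • W) + (-(U * (G * (1 - V))) + -γ • W)
            + ((c : ℝ) : ℂ) • W := by abel
  · -- Re(u*a) = 0
    rw [ha]
    have h0 := uPerp u hu (G.mulVec v)
    rw [dotProduct_sub, dotProduct_neg, h0, dotProduct_smul, hu]
    simp [hγ2]
  · -- Re(v*b) = 0
    rw [hb]
    have h0 := uPerp v hv (Gᴴ.mulVec u)
    rw [dotProduct_add, dotProduct_neg, h0, dotProduct_smul, hv]
    simp [hγ2]
end

section
/- Let u, v, x, y ∈ ℂⁿ be unit vectors, c ∈ ℂ, and G = c · x y*. Define P(Z) = Z − (I − u u*) Z (I − v v*). Then ‖G − P(G)‖_F = |c| · ‖(I − u u*) x‖ · ‖(I − v v*) y‖ ≤ |c| · ‖x − u‖ · ‖y − v‖. In particular, if ‖x − u‖ ≤ δ and ‖y − v‖ ≤ δ, then ‖P(G) − G‖_F ≤ |c| δ², so near a rank-one matrix aligned with the eigenvector pair, the tangent-space projection of the gradient differs from the gradient only by a quantity that is quadratically small. -/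
open Matrix

/-- Euclidean norm of a complex vector. -/
noncomputable def vnorm {n : ℕ} (x : Fin n → ℂ) : ℝ :=
  Real.sqrt (star x ⬝ᵥ x).re

lemma vnorm_nonneg' {n : ℕ} (z : Fin n → ℂ) : 0 ≤ vnorm z := Real.sqrt_nonneg _

lemma frobNorm_neg' {n : ℕ} (X : Matrix (Fin n) (Fin n) ℂ) : frobNorm (-X) = frobNorm X := by
  simp [frobNorm, frobInner]


lemma dot_self_eq {n : ℕ} (z : Fin n → ℂ) :
    star z ⬝ᵥ z = ((∑ i, Complex.normSq (z i) : ℝ) : ℂ) := by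
  simp [dotProduct, Complex.normSq_eq_conj_mul_self]

lemma dot_self_re {n : ℕ} (z : Fin n → ℂ) :
    (star z ⬝ᵥ z).re = ∑ i, Complex.normSq (z i) := by
  rw [dot_self_eq]; exact Complex.ofReal_re _

lemma dot_self_re_nonneg {n : ℕ} (z : Fin n → ℂ) : 0 ≤ (star z ⬝ᵥ z).re := by
  rw [dot_self_re]
  exact Finset.sum_nonneg fun i _ => Complex.normSq_nonneg _

lemma unit_dot {n : ℕ} {u : Fin n → ℂ} (hu : Real.sqrt (star u ⬝ᵥ u).re = 1) :
    star u ⬝ᵥ u = 1 := by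
  have h1 : (star u ⬝ᵥ u).re = 1 := by
    have := Real.sq_sqrt (dot_self_re_nonneg u)
    rw [hu] at this; simpa using this.symm
  rw [dot_self_eq] at h1 ⊢
  rw [Complex.ofReal_re] at h1
  exact_mod_cast congrArg (Complex.ofReal) h1

lemma proj_mulVec {n : ℕ} (u z : Fin n → ℂ) (hu : star u ⬝ᵥ u = 1) :
    (1 - vecMulVec u (star u)) *ᵥ z = z - (star u ⬝ᵥ z) • u := by
  rw [Matrix.sub_mulVec, Matrix.one_mulVec]
  congr 1
  ext i
  simp [Matrix.mulVec, dotProduct, vecMulVec_apply, Finset.mul_sum, mul_comm, mul_assoc,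
    mul_left_comm]

lemma sub_smul_dot {n : ℕ} (u z : Fin n → ℂ) (hu : star u ⬝ᵥ u = 1) :
    star (z - (star u ⬝ᵥ z) • u) ⬝ᵥ (z - (star u ⬝ᵥ z) • u)
      = star z ⬝ᵥ z - (Complex.normSq (star u ⬝ᵥ z) : ℝ) := by
  set t := star u ⬝ᵥ z with ht
  have hzu : star z ⬝ᵥ u = (starRingEnd ℂ) t := by
    rw [ht, star_dotProduct]; simp
  simp only [star_sub, star_smul, sub_dotProduct, dotProduct_sub,
    smul_dotProduct, dotProduct_smul, hu, hzu, ← ht, smul_eq_mul,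
    RCLike.star_def, mul_one]
  rw [Complex.normSq_eq_conj_mul_self]
  ring

lemma vnorm_proj_le {n : ℕ} (u z : Fin n → ℂ) (hu : star u ⬝ᵥ u = 1) :
    Real.sqrt (star ((1 - vecMulVec u (star u)) *ᵥ z) ⬝ᵥ ((1 - vecMulVec u (star u)) *ᵥ z)).re
      ≤ Real.sqrt (star z ⬝ᵥ z).re := by
  apply Real.sqrt_le_sqrt
  rw [proj_mulVec u z hu, sub_smul_dot u z hu]
  simp [Complex.normSq_nonneg]

lemma mul_vmv {n : ℕ} (A : Matrix (Fin n) (Fin n) ℂ) (p q : Fin n → ℂ) :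
    A * vecMulVec p q = vecMulVec (A *ᵥ p) q := by
  ext i j
  simp [Matrix.mul_apply, vecMulVec_apply, Matrix.mulVec, dotProduct, Finset.sum_mul, mul_assoc]

lemma vmv_mul {n : ℕ} (B : Matrix (Fin n) (Fin n) ℂ) (p q : Fin n → ℂ) :
    vecMulVec p q * B = vecMulVec p (q ᵥ* B) := by
  ext i j
  simp [Matrix.mul_apply, vecMulVec_apply, Matrix.vecMul, dotProduct, Finset.mul_sum, mul_assoc]

lemma proj_herm {n : ℕ} (v : Fin n → ℂ) :
    (1 - vecMulVec v (star v))ᴴ = 1 - vecMulVec v (star v) := by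
  ext i j
  simp [Matrix.conjTranspose_apply, Matrix.sub_apply, Matrix.one_apply, vecMulVec_apply,
    apply_ite (starRingEnd ℂ), eq_comm, mul_comm]

lemma star_vmul_eq {n : ℕ} (v y : Fin n → ℂ) :
    star y ᵥ* (1 - vecMulVec v (star v)) = star ((1 - vecMulVec v (star v)) *ᵥ y) := by
  rw [Matrix.star_mulVec, proj_herm]

lemma frob_rank_one {n : ℕ} (c : ℂ) (a b : Fin n → ℂ) :
    Real.sqrt (∑ i, ∑ j, (starRingEnd ℂ) ((c • vecMulVec a (star b)) i j)
        * (c • vecMulVec a (star b)) i j).re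
      = ‖c‖ * Real.sqrt (star a ⬝ᵥ a).re * Real.sqrt (star b ⬝ᵥ b).re := by
  have h : (∑ i, ∑ j, (starRingEnd ℂ) ((c • vecMulVec a (star b)) i j)
        * (c • vecMulVec a (star b)) i j).re
      = Complex.normSq c * ((∑ i, Complex.normSq (a i)) * (∑ j, Complex.normSq (b j))) := by
    rw [Complex.re_sum]
    simp only [Complex.re_sum, Matrix.smul_apply, vecMulVec_apply, Pi.star_apply, smul_eq_mul,
      ← Complex.normSq_eq_conj_mul_self, Complex.ofReal_re, Complex.normSq_mul,
      Complex.normSq_conj]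
    simp only [← Finset.mul_sum, ← Finset.sum_mul]
    simp [RCLike.star_def, Complex.normSq_conj]
  rw [h, dot_self_re, dot_self_re]
  rw [Real.sqrt_mul (Complex.normSq_nonneg c), Real.sqrt_mul
    (Finset.sum_nonneg fun i _ => Complex.normSq_nonneg _)]
  rw [← Complex.norm_def, mul_assoc]

/-- Near a rank-one matrix aligned with the eigenvector pair, the tangent-space projection
of the rank-one gradient `G = c·x y*` differs from `G` only quadratically:
`‖G - P(G)‖_F = |c|·‖(I-uu*)x‖·‖(I-vv*)y‖ ≤ |c|·‖x-u‖·‖y-v‖ ≤ |c|δ²`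
when `‖x-u‖ ≤ δ` and `‖y-v‖ ≤ δ`. -/
theorem projection_gradient_quadratic_closeness
    {n : ℕ} (u v x y : Fin n → ℂ)
    (hu : vnorm u = 1) (hv : vnorm v = 1)
    (hx : vnorm x = 1) (hy : vnorm y = 1)
    (c : ℂ) (G : Matrix (Fin n) (Fin n) ℂ)
    (hG : G = c • vecMulVec x (star y))
    (P : Matrix (Fin n) (Fin n) ℂ → Matrix (Fin n) (Fin n) ℂ)
    (hP : ∀ Z, P Z = Z - (1 - vecMulVec u (star u)) * Z * (1 - vecMulVec v (star v))) :
    frobNorm (G - P G) =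
      ‖c‖ * vnorm ((1 - vecMulVec u (star u)).mulVec x) *
        vnorm ((1 - vecMulVec v (star v)).mulVec y) ∧
    frobNorm (G - P G) ≤ ‖c‖ * vnorm (x - u) * vnorm (y - v) ∧
    ∀ δ : ℝ, vnorm (x - u) ≤ δ → vnorm (y - v) ≤ δ →
      frobNorm (P G - G) ≤ ‖c‖ * δ ^ 2 := by
  set A := 1 - vecMulVec u (star u) with hA
  set B := 1 - vecMulVec v (star v) with hB
  have hud : star u ⬝ᵥ u = 1 := unit_dot hu
  have hvd : star v ⬝ᵥ v = 1 := unit_dot hv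
  have key : G - P G = c • vecMulVec (A *ᵥ x) (star (B *ᵥ y)) := by
    rw [hP, sub_sub_cancel, hG, Matrix.mul_smul, Matrix.smul_mul, mul_vmv, vmv_mul,
      hB, star_vmul_eq]
  have eq1 : frobNorm (G - P G) = ‖c‖ * vnorm (A *ᵥ x) * vnorm (B *ᵥ y) := by
    rw [key]
    simp only [frobNorm, frobInner, vnorm]
    exact frob_rank_one c _ _
  have hAu : A *ᵥ u = 0 := by
    rw [hA, proj_mulVec u u hud, hud]; simp
  have hBv : B *ᵥ v = 0 := by
    rw [hB, proj_mulVec v v hvd, hvd]; simp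
  have hax : A *ᵥ x = A *ᵥ (x - u) := by
    rw [Matrix.mulVec_sub, hAu, sub_zero]
  have hby : B *ᵥ y = B *ᵥ (y - v) := by
    rw [Matrix.mulVec_sub, hBv, sub_zero]
  have hale : vnorm (A *ᵥ x) ≤ vnorm (x - u) := by
    rw [hax]; exact vnorm_proj_le u (x - u) hud
  have hble : vnorm (B *ᵥ y) ≤ vnorm (y - v) := by
    rw [hby]; exact vnorm_proj_le v (y - v) hvd
  have habs : (0:ℝ) ≤ ‖c‖ := norm_nonneg c
  have eq2 : frobNorm (G - P G) ≤ ‖c‖ * vnorm (x - u) * vnorm (y - v) := by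
    rw [eq1]
    exact mul_le_mul (mul_le_mul_of_nonneg_left hale habs) hble (vnorm_nonneg' _)
      (mul_nonneg habs (vnorm_nonneg' _))
  refine ⟨eq1, eq2, fun δ h1 h2 => ?_⟩
  have hδ : 0 ≤ δ := le_trans (vnorm_nonneg' _) h1
  have : frobNorm (P G - G) = frobNorm (G - P G) := by
    rw [show P G - G = -(G - P G) from (neg_sub _ _).symm, frobNorm_neg']
  rw [this, pow_two, ← mul_assoc]
  calc frobNorm (G - P G) ≤ ‖c‖ * vnorm (x - u) * vnorm (y - v) := eq2
    _ ≤ ‖c‖ * δ * δ :=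
      mul_le_mul (mul_le_mul_of_nonneg_left h1 habs) h2 (vnorm_nonneg' _)
        (mul_nonneg habs hδ)
end

section
/- Let u, v, x, y ∈ ℂⁿ be unit vectors and γ ∈ ℂ; set α = u* x and β = v* y, and assume α ≠ 0, β ≠ 0 and γ ≠ 0. Suppose (u, v) is a stationary point of the combined system, i.e. α conj(β) γ · u − conj(β) γ · x − (i/2) Im(α conj(β) γ) · u = 0 and conj(α) β conj(γ) · v − conj(α) conj(γ) · y − (i/2) Im(conj(α) β conj(γ)) · v = 0. Then Im(α conj(β) γ) = 0, x = α u and y = β v; consequently (u, v) is a stationary point of each of the two split systems separately: α conj(β) γ · u − conj(β) γ · x = 0, conj(α) β conj(γ) · v − conj(α) conj(γ) · y = 0, and the rotational terms (i/2) Im(α conj(β) γ) · u and (i/2) Im(conj(α) β conj(γ)) · v vanish. -/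
open Matrix

/-- The splitting of the factor differential equations preserves stationary points:
if `(u,v)` is stationary for the combined system, then `Im(α·conj(β)·γ) = 0`, `x = α u`,
`y = β v`, both split systems are stationary, and the rotational terms vanish. -/
theorem splitting_preserves_stationary_points
    {n : ℕ} (u v x y : Fin n → ℂ)
    (hu : star u ⬝ᵥ u = 1) (hv : star v ⬝ᵥ v = 1)
    (hx : star x ⬝ᵥ x = 1) (hy : star y ⬝ᵥ y = 1)
    (γ α β : ℂ)
    (hα : α = star u ⬝ᵥ x) (hβ : β = star v ⬝ᵥ y)
    (hα0 : α ≠ 0) (hβ0 : β ≠ 0) (hγ0 : γ ≠ 0)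
    (h1 : (α * (starRingEnd ℂ) β * γ) • u - ((starRingEnd ℂ) β * γ) • x -
      ((Complex.I / 2) * (((α * (starRingEnd ℂ) β * γ).im : ℝ) : ℂ)) • u = 0)
    (h2 : ((starRingEnd ℂ) α * β * (starRingEnd ℂ) γ) • v -
      ((starRingEnd ℂ) α * (starRingEnd ℂ) γ) • y -
      ((Complex.I / 2) * ((((starRingEnd ℂ) α * β * (starRingEnd ℂ) γ).im : ℝ) : ℂ)) • v = 0) :
    (α * (starRingEnd ℂ) β * γ).im = 0 ∧
    x = α • u ∧ y = β • v ∧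
    (α * (starRingEnd ℂ) β * γ) • u - ((starRingEnd ℂ) β * γ) • x = 0 ∧
    ((starRingEnd ℂ) α * β * (starRingEnd ℂ) γ) • v -
      ((starRingEnd ℂ) α * (starRingEnd ℂ) γ) • y = 0 ∧
    ((Complex.I / 2) * (((α * (starRingEnd ℂ) β * γ).im : ℝ) : ℂ)) • u = 0 ∧
    ((Complex.I / 2) * ((((starRingEnd ℂ) α * β * (starRingEnd ℂ) γ).im : ℝ) : ℂ)) • v = 0 := by
  set s : ℂ := α * (starRingEnd ℂ) β * γ with hs
  have hβγ : (starRingEnd ℂ) β * γ ≠ 0 := mul_ne_zero (by simpa using hβ0) hγ0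
  have hαγ : (starRingEnd ℂ) α * (starRingEnd ℂ) γ ≠ 0 :=
    mul_ne_zero (by simpa using hα0) (by simpa using hγ0)
  -- Solve h1 for x
  have hx1 : ((starRingEnd ℂ) β * γ) • x =
      (s - (Complex.I / 2) * ((s.im : ℝ) : ℂ)) • u := by
    rw [sub_smul]
    have h := h1
    rw [sub_sub, sub_eq_zero] at h
    rw [h]
    abel
  have hxeq : x = (((starRingEnd ℂ) β * γ)⁻¹ *
      (s - (Complex.I / 2) * ((s.im : ℝ) : ℂ))) • u := by
    rw [mul_smul, ← hx1, ← mul_smul, inv_mul_cancel₀ hβγ, one_smul]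
  -- Compute α
  have hαc : α = ((starRingEnd ℂ) β * γ)⁻¹ *
      (s - (Complex.I / 2) * ((s.im : ℝ) : ℂ)) := by
    rw [hα, hxeq, dotProduct_smul, hu, smul_eq_mul, mul_one]
  have hkey : α * ((starRingEnd ℂ) β * γ) =
      s - (Complex.I / 2) * ((s.im : ℝ) : ℂ) := by
    rw [hαc, mul_comm, ← mul_assoc, mul_inv_cancel₀ hβγ, one_mul]
  have hIm' : s.im = 0 := by
    have hc : ((s.im : ℝ) : ℂ) = 0 := by
      linear_combination (-2 * Complex.I) * hkey + (-2 * Complex.I) * hs + ((s.im : ℝ) : ℂ) * Complex.I_sq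
    exact_mod_cast congrArg Complex.re hc
  have hIm : ((s.im : ℝ) : ℂ) = 0 := by exact_mod_cast hIm'
  have hxu : x = α • u := by rw [hxeq, ← hαc]
  -- second equation
  set t : ℂ := (starRingEnd ℂ) α * β * (starRingEnd ℂ) γ with ht
  have htconj : t = (starRingEnd ℂ) s := by
    rw [ht, hs]; simp [mul_comm, mul_assoc, mul_left_comm]
  have htIm : ((t.im : ℝ) : ℂ) = 0 := by
    rw [htconj]; simp [Complex.conj_im, hIm']
  have hy1 : ((starRingEnd ℂ) α * (starRingEnd ℂ) γ) • y = t • v := by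
    have h := h2
    rw [sub_sub, sub_eq_zero] at h
    rw [htIm, mul_zero, zero_smul, add_zero] at h
    exact h.symm
  have hyeq : y = (((starRingEnd ℂ) α * (starRingEnd ℂ) γ)⁻¹ * t) • v := by
    rw [mul_smul, ← hy1, ← mul_smul, inv_mul_cancel₀ hαγ, one_smul]
  have hβc : β = ((starRingEnd ℂ) α * (starRingEnd ℂ) γ)⁻¹ * t := by
    rw [hβ, hyeq, dotProduct_smul, hv, smul_eq_mul, mul_one]
  have hyv : y = β • v := by rw [hyeq, ← hβc]
  refine ⟨hIm', hxu, hyv, ?_, ?_, ?_, ?_⟩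
  · rw [hxu, ← mul_smul, ← sub_smul]
    have hz : s - (starRingEnd ℂ) β * γ * α = 0 := by rw [hs]; ring
    rw [hz, zero_smul]
  · rw [hyv, ← mul_smul, ← sub_smul]
    have hz : t - (starRingEnd ℂ) α * (starRingEnd ℂ) γ * β = 0 := by rw [ht]; ring
    rw [hz, zero_smul]
  · rw [hIm, mul_zero, zero_smul]
  · rw [htIm, mul_zero, zero_smul]
end
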